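/- Let V be a finite set with |V| = n ≥ 1, let w : V → ℕ be a weight function with w(V) > 0, and let α and δ be real numbers with 0 < δ < α. Define K = δ·w(V)/(n·α), define w'(v) = ⌊w(v)/K⌋ for every v ∈ V, and define α' = α·K·w'(V)/w(V). Then for every subset H ⊆ V with w'(H) ≤ w'(V)/α', one has w(H) ≤ (1 + δ)·w(V)/α. -/

import Mathlib

/-- Guarantee of the bicriteria FPTAS for the Weighted α-Separator Problem: with
`K = δ·w(V)/(n·α)`, `w'(v) = ⌊w(v)/K⌋` and `α' = α·K·w'(V)/w(V)`, any `H ⊆ V`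
with `w'(H) ≤ w'(V)/α'` satisfies `w(H) ≤ (1 + δ)·w(V)/α`. -/
theorem stmt_7 {V : Type*} [Fintype V] (w : V → ℕ)
    (hn : 1 ≤ Fintype.card V) (hW : 0 < ∑ v, w v)
    (α δ : ℝ) (hδ : 0 < δ) (hδα : δ < α) :
    let n : ℕ := Fintype.card V
    let W : ℝ := ∑ v, (w v : ℝ)
    let K : ℝ := δ * W / (n * α)
    let w' : V → ℕ := fun v => ⌊(w v : ℝ) / K⌋₊
    let W' : ℝ := ∑ v, (w' v : ℝ)
    let α' : ℝ := α * K * W' / W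
    ∀ H : Finset V, (∑ v ∈ H, (w' v : ℝ)) ≤ W' / α' →
      (∑ v ∈ H, (w v : ℝ)) ≤ (1 + δ) * W / α := by
  intro n W K w' W' α' H hH
  have hα : (0:ℝ) < α := hδ.trans hδα
  have hWpos : (0:ℝ) < W := by
    have : (0:ℝ) < ((∑ v, w v : ℕ) : ℝ) := by exact_mod_cast hW
    simpa [W, Nat.cast_sum] using this
  have hnpos : (0:ℝ) < (n:ℝ) := by exact_mod_cast Nat.lt_of_lt_of_le Nat.zero_lt_one hn
  have hK : (0:ℝ) < K := by
    apply div_pos (mul_pos hδ hWpos) (mul_pos hnpos hα)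
  -- key bound: K * Σ_H w' ≤ W / α
  have key : K * (∑ v ∈ H, (w' v : ℝ)) ≤ W / α := by
    rcases eq_or_lt_of_le (Finset.sum_nonneg (fun v _ => Nat.cast_nonneg (w' v)) : (0:ℝ) ≤ W') with hW0 | hW0
    · -- W' = 0, so each term is 0
      have hz : ∀ v ∈ H, (w' v : ℝ) = 0 := by
        intro v _
        have := Finset.sum_eq_zero_iff_of_nonneg
          (fun v _ => Nat.cast_nonneg (w' v)) |>.mp hW0.symm v (Finset.mem_univ v)
        exact this
      rw [Finset.sum_eq_zero hz, mul_zero]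
      positivity
    · have hα' : W' / α' = W / (α * K) := by
        have : α' = α * K * W' / W := rfl
        rw [this]
        field_simp
        exact mul_inv_cancel₀ (ne_of_gt hW0)
      have hH' : (∑ v ∈ H, (w' v : ℝ)) ≤ W / (α * K) := hα' ▸ hH
      calc K * (∑ v ∈ H, (w' v : ℝ)) ≤ K * (W / (α * K)) := by
            exact mul_le_mul_of_nonneg_left hH' hK.le
        _ = W / α := by field_simp
  -- pointwise: w v ≤ K * w' v + K
  have hpt : ∀ v, (w v : ℝ) ≤ K * (w' v : ℝ) + K := by
    intro v
    have h1 : (w v : ℝ) / K < (w' v : ℝ) + 1 := Nat.lt_floor_add_one _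
    have := (div_lt_iff₀ hK).mp h1
    nlinarith
  calc (∑ v ∈ H, (w v : ℝ)) ≤ ∑ v ∈ H, (K * (w' v : ℝ) + K) :=
        Finset.sum_le_sum (fun v _ => hpt v)
    _ = K * (∑ v ∈ H, (w' v : ℝ)) + H.card * K := by
        rw [Finset.sum_add_distrib, Finset.mul_sum, Finset.sum_const, nsmul_eq_mul]
    _ ≤ W / α + (n:ℝ) * K := by
        have hcard : (H.card : ℝ) ≤ (n : ℝ) := by
          exact_mod_cast Finset.card_le_card (Finset.subset_univ H)
        have := mul_le_mul_of_nonneg_right hcard hK.le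
        linarith [key]
    _ = (1 + δ) * W / α := by
        have : (n:ℝ) * K = δ * W / α := by
          show (n:ℝ) * (δ * W / ((n:ℝ) * α)) = δ * W / α
          field_simp
        rw [this]; field_simp
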